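/- Let G = (V,E) be a finite simple graph, let E_c ⊆ E, let c denote the number of connected components of the spanning subgraph (V, E_c), and let k ≥ 1 be an integer. Then there exists a set E* ⊆ E ∖ E_c with |E*| ≤ k·c such that for every nonempty proper vertex set S ⊆ V satisfying ∂S ∩ E_c = ∅ and |∂S| ≤ k, every edge of ∂S belongs to E*. -/

import Mathlib

open Classical

noncomputable section

/-- The edge set of `G` as a `Finset` of `Sym2 V`. -/
def edgeFin {V : Type*} [Fintype V] (G : SimpleGraph V) : Finset (Sym2 V) :=
  Finset.univ.filter (fun e => e ∈ G.edgeSet)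

/-- The set of edges of `G` with exactly one endpoint in `S` (the cut `(S, V ∖ S)`). -/
def cutEdges {V : Type*} [Fintype V] (G : SimpleGraph V) (S : Finset V) : Finset (Sym2 V) :=
  Finset.univ.filter (fun e => e ∈ G.edgeSet ∧ ∃ u v, e = s(u, v) ∧ u ∈ S ∧ v ∉ S)

/-- The probability, under independent `Bernoulli(p)` sampling of each element of the
ground set `E`, that the sampled subset satisfies `Q`. -/
def cubePr {β : Type*} [DecidableEq β] (E : Finset β) (p : ℝ) (Q : Finset β → Prop) : ℝ :=
  ∑ S ∈ E.powerset, p ^ S.card * (1 - p) ^ (E.card - S.card) * (if Q S then 1 else 0)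

/-- `C` is (the vertex set of) a connected component of `H`. -/
def IsCompOf {V : Type*} [Fintype V] (H : SimpleGraph V) (C : Finset V) : Prop :=
  ∃ v : V, C = Finset.univ.filter (fun u => H.Reachable v u)


section Aux
open SimpleGraph
variable {V : Type*} [Fintype V]

/-- number of components of fromEdgeSet -/
def compC (A : Finset (Sym2 V)) : ℕ :=
  Nat.card (SimpleGraph.fromEdgeSet (↑A : Set (Sym2 V))).ConnectedComponent

lemma card_cc_lt {G G' : SimpleGraph V} (h : G ≤ G') (u v : V)
    (h1 : ¬ G.Reachable u v) (h2 : G'.Reachable u v) :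
    Nat.card G'.ConnectedComponent < Nat.card G.ConnectedComponent := by
  have : Finite G.ConnectedComponent := Quot.finite _
  have : Finite G'.ConnectedComponent := Quot.finite _
  have hfin : Fintype G.ConnectedComponent := Fintype.ofFinite _
  have hfin' : Fintype G'.ConnectedComponent := Fintype.ofFinite _
  rw [Nat.card_eq_fintype_card, Nat.card_eq_fintype_card]
  apply Fintype.card_lt_of_surjective_not_injective
      (ConnectedComponent.map (SimpleGraph.Hom.ofLE h))
  · intro C
    refine C.ind (fun w => ⟨G.connectedComponentMk w, rfl⟩)
  · intro hinj
    apply h1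
    have heq : (G.connectedComponentMk u).map (SimpleGraph.Hom.ofLE h)
        = (G.connectedComponentMk v).map (SimpleGraph.Hom.ofLE h) := by
      simp only [ConnectedComponent.map_mk]
      exact ConnectedComponent.sound h2
    have := hinj heq
    exact (ConnectedComponent.eq).mp this

/-- One greedy step: add edge `e` unless its endpoints are already connected. -/
def roundStep (Ec : Finset (Sym2 V)) (B : Finset (Sym2 V)) (e : Sym2 V) : Finset (Sym2 V) :=
  if (∀ u v : V, e = s(u, v) →
      (SimpleGraph.fromEdgeSet (↑(Ec ∪ B) : Set (Sym2 V))).Reachable u v)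
  then B else insert e B

lemma reach_mono {A B : Finset (Sym2 V)} (h : A ⊆ B) {u v : V}
    (hr : (SimpleGraph.fromEdgeSet (↑A : Set (Sym2 V))).Reachable u v) :
    (SimpleGraph.fromEdgeSet (↑B : Set (Sym2 V))).Reachable u v :=
  hr.mono (SimpleGraph.fromEdgeSet_mono (by exact_mod_cast h))

lemma fold_spec (Ec : Finset (Sym2 V)) (l : List (Sym2 V)) (hl : ∀ e ∈ l, ¬ e.IsDiag)
    (B : Finset (Sym2 V)) :
    B ⊆ l.foldl (roundStep Ec) B ∧ l.foldl (roundStep Ec) B ⊆ B ∪ l.toFinset ∧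
    compC (Ec ∪ l.foldl (roundStep Ec) B) + (l.foldl (roundStep Ec) B).card
      ≤ compC (Ec ∪ B) + B.card ∧
    (∀ e ∈ l, ∀ u v : V, e = s(u, v) →
      (SimpleGraph.fromEdgeSet (↑(Ec ∪ l.foldl (roundStep Ec) B) : Set (Sym2 V))).Reachable u v) := by
  induction l generalizing B with
  | nil => simp
  | cons e l ih =>
    have hld : ∀ e' ∈ l, ¬ e'.IsDiag := fun e' he' => hl e' (List.mem_cons_of_mem _ he')
    simp only [List.foldl_cons]
    by_cases hcond : ∀ u v : V, e = s(u, v) →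
        (SimpleGraph.fromEdgeSet (↑(Ec ∪ B) : Set (Sym2 V))).Reachable u v
    · have hstep : roundStep Ec B e = B := if_pos hcond
      rw [hstep]
      obtain ⟨h1, h2, h3, h4⟩ := ih hld B
      refine ⟨h1, h2.trans ?_, h3, ?_⟩
      · intro x hx
        rcases Finset.mem_union.mp hx with h | h
        · exact Finset.mem_union_left _ h
        · exact Finset.mem_union_right _ (by simp [h])
      · intro e' he' u v huv
        rcases List.mem_cons.mp he' with rfl | he'
        · exact reach_mono (Finset.union_subset_union_right h1) (hcond u v huv)
        · exact h4 e' he' u v huv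
    · have hstep : roundStep Ec B e = insert e B := if_neg hcond
      rw [hstep]
      push_neg at hcond
      obtain ⟨u, v, huv, hnr⟩ := hcond
      have hne : u ≠ v := by
        intro h; exact hl e List.mem_cons_self (by rw [huv, h]; exact Sym2.mk_isDiag_iff.mpr rfl)
      have henotB : e ∉ B := by
        intro h
        exact hnr (((SimpleGraph.fromEdgeSet_adj _).mpr
          ⟨by exact_mod_cast Finset.mem_union_right _ (huv ▸ h), hne⟩).reachable)
      have hadj : (SimpleGraph.fromEdgeSet (↑(Ec ∪ insert e B) : Set (Sym2 V))).Adj u v :=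
        (SimpleGraph.fromEdgeSet_adj _).mpr
          ⟨by rw [← huv]; exact_mod_cast Finset.mem_union_right _ (Finset.mem_insert_self e B), hne⟩
      have hlt : compC (Ec ∪ insert e B) < compC (Ec ∪ B) := by
        apply card_cc_lt (SimpleGraph.fromEdgeSet_mono
          (by exact_mod_cast Finset.union_subset_union_right (Finset.subset_insert e B))) u v hnr
        exact hadj.reachable
      have hcard : (insert e B).card = B.card + 1 := Finset.card_insert_of_notMem henotB
      obtain ⟨h1, h2, h3, h4⟩ := ih hld (insert e B)
      refine ⟨(Finset.subset_insert e B).trans h1, ?_, ?_, ?_⟩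
      · intro x hx
        rcases Finset.mem_union.mp (h2 hx) with h | h
        · rcases Finset.mem_insert.mp h with rfl | h
          · exact Finset.mem_union_right _ (by simp)
          · exact Finset.mem_union_left _ h
        · exact Finset.mem_union_right _ (by simp [List.mem_toFinset.mp h])
      · calc compC (Ec ∪ l.foldl (roundStep Ec) (insert e B)) + (l.foldl (roundStep Ec) (insert e B)).card
            ≤ compC (Ec ∪ insert e B) + (insert e B).card := h3
          _ ≤ compC (Ec ∪ B) + B.card := by omega
      · intro e' he' u' v' hu'v'
        rcases List.mem_cons.mp he' with heq | he'
        · subst heq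
          have hmem : s(u', v') ∈ (↑(Ec ∪ l.foldl (roundStep Ec) (insert e' B)) : Set (Sym2 V)) := by
            rw [← hu'v']
            exact_mod_cast Finset.mem_union_right _ (h1 (Finset.mem_insert_self e' B))
          have hne' : u' ≠ v' := by
            intro h
            exact hl _ List.mem_cons_self (by rw [hu'v', h]; exact Sym2.mk_isDiag_iff.mpr rfl)
          exact ((SimpleGraph.fromEdgeSet_adj _).mpr ⟨hmem, hne'⟩).reachable
        · exact h4 e' he' u' v' hu'v'

/-- `k` rounds of greedy maximal forests over the remaining edges. -/
def certif (Ec R : Finset (Sym2 V)) : ℕ → Finset (Sym2 V)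
  | 0 => ∅
  | n + 1 => certif Ec R n ∪ ((R \ certif Ec R n).toList.foldl (roundStep Ec) ∅)

lemma round_subset (Ec R : Finset (Sym2 V)) (hR : ∀ e ∈ R, ¬ e.IsDiag) (n : ℕ) :
    (R \ certif Ec R n).toList.foldl (roundStep Ec) ∅ ⊆ R \ certif Ec R n := by
  intro x hx
  obtain ⟨-, h2, -, -⟩ := fold_spec Ec (R \ certif Ec R n).toList
    (fun e he => hR e (Finset.mem_sdiff.mp (Finset.mem_toList.mp he)).1) ∅
  have := h2 hx
  rw [Finset.empty_union, Finset.toList_toFinset] at this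
  exact this

lemma certif_subset (Ec R : Finset (Sym2 V)) (hR : ∀ e ∈ R, ¬ e.IsDiag) :
    ∀ n, certif Ec R n ⊆ R := by
  intro n
  induction n with
  | zero => simp [certif]
  | succ n ih =>
    simp only [certif]
    exact Finset.union_subset ih
      ((round_subset Ec R hR n).trans (Finset.sdiff_subset))

lemma certif_mono (Ec R : Finset (Sym2 V)) {m n : ℕ} (h : m ≤ n) :
    certif Ec R m ⊆ certif Ec R n := by
  induction n with
  | zero => simp_all
  | succ n ih =>
    rcases Nat.lt_or_ge m (n+1) with h' | h'
    · exact (ih (Nat.lt_succ_iff.mp h')).trans (Finset.subset_union_left)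
    · have : m = n + 1 := le_antisymm h h'
      subst this; rfl

lemma certif_card (Ec R : Finset (Sym2 V)) (hR : ∀ e ∈ R, ¬ e.IsDiag) :
    ∀ n, (certif Ec R n).card ≤ n * compC Ec := by
  intro n
  induction n with
  | zero => simp [certif]
  | succ n ih =>
    obtain ⟨-, -, h3, -⟩ := fold_spec Ec (R \ certif Ec R n).toList
      (fun e he => hR e (Finset.mem_sdiff.mp (Finset.mem_toList.mp he)).1) ∅
    rw [Finset.union_empty, Finset.card_empty] at h3
    calc (certif Ec R (n+1)).card
        ≤ (certif Ec R n).card + ((R \ certif Ec R n).toList.foldl (roundStep Ec) ∅).card :=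
          Finset.card_union_le _ _
      _ ≤ n * compC Ec + compC Ec := by
          have : ((R \ certif Ec R n).toList.foldl (roundStep Ec) ∅).card ≤ compC Ec := by omega
          omega
      _ = (n + 1) * compC Ec := by ring

lemma certif_max (Ec R : Finset (Sym2 V)) (hR : ∀ e ∈ R, ¬ e.IsDiag) (n : ℕ)
    {e : Sym2 V} (he : e ∈ R \ certif Ec R n) {u v : V} (huv : e = s(u, v)) :
    (SimpleGraph.fromEdgeSet
      (↑(Ec ∪ (R \ certif Ec R n).toList.foldl (roundStep Ec) ∅) : Set (Sym2 V))).Reachable u v := by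
  obtain ⟨-, -, -, h4⟩ := fold_spec Ec (R \ certif Ec R n).toList
    (fun e he => hR e (Finset.mem_sdiff.mp (Finset.mem_toList.mp he)).1) ∅
  exact h4 e (Finset.mem_toList.mpr he) u v huv

end Aux

/-- Generalized sparse certificates: if `(V, E_c)` has `c` connected
components, there is `E* ⊆ E ∖ E_c` with `|E*| ≤ k·c` containing every edge of every
cut `∂S` with `∂S ∩ E_c = ∅` and `|∂S| ≤ k`. -/
theorem statement10 {V : Type*} [Fintype V] (G : SimpleGraph V)
    (Ec : Finset (Sym2 V)) (hEc : Ec ⊆ edgeFin G)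
    (c : ℕ)
    (hc : c = Nat.card (SimpleGraph.fromEdgeSet (↑Ec : Set (Sym2 V))).ConnectedComponent)
    (k : ℕ) (hk : 1 ≤ k) :
    ∃ Estar : Finset (Sym2 V), Estar ⊆ edgeFin G \ Ec ∧ Estar.card ≤ k * c ∧
      ∀ S : Finset V, S.Nonempty → S ≠ Finset.univ →
        cutEdges G S ∩ Ec = ∅ → (cutEdges G S).card ≤ k →
        cutEdges G S ⊆ Estar := by
  set R : Finset (Sym2 V) := edgeFin G \ Ec with hRdef
  have hR : ∀ e ∈ R, ¬ e.IsDiag := by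
    intro e he
    have : e ∈ G.edgeSet := by
      have := (Finset.mem_sdiff.mp he).1
      simpa [edgeFin] using this
    exact G.not_isDiag_of_mem_edgeSet this
  refine ⟨certif Ec R k, certif_subset Ec R hR k, ?_, ?_⟩
  · have hcc : compC Ec = c := by rw [hc]; rfl
    have := certif_card Ec R hR k
    rwa [hcc] at this
  · intro S hS hSne hcut hkcard f hf
    by_contra hfE
    -- basic facts about f
    obtain ⟨-, hfG, u, v, hfuv, huS, hvS⟩ := Finset.mem_filter.mp hf
    have hfEc : f ∉ Ec := by
      intro h
      have : f ∈ cutEdges G S ∩ Ec := Finset.mem_inter.mpr ⟨hf, h⟩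
      simp [hcut] at this
    have hfR : f ∈ R := Finset.mem_sdiff.mpr ⟨by simp [edgeFin, hfG], hfEc⟩
    -- for each round, find a distinct crossing edge in that round's forest
    have key : ∀ i : Fin k, ∃ e, e ∈ cutEdges G S ∧ e ∈ certif Ec R (i + 1) ∧
        e ∉ certif Ec R i := by
      intro i
      have hfnot : f ∉ certif Ec R i :=
        fun h => hfE (certif_mono Ec R (Nat.le_of_lt_succ (Nat.lt_succ_of_lt i.2)) h)
      have hreach := certif_max Ec R hR i (Finset.mem_sdiff.mpr ⟨hfR, hfnot⟩) hfuv
      obtain ⟨w⟩ := hreach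
      obtain ⟨d, -, hdS1, hdS2⟩ := w.exists_boundary_dart (↑S : Set V)
        (by exact_mod_cast huS) (by exact_mod_cast hvS)
      have hadj := d.adj
      rw [SimpleGraph.fromEdgeSet_adj] at hadj
      obtain ⟨hdmem, hdne⟩ := hadj
      have hdmem' : s(d.fst, d.snd) ∈ Ec ∪ (R \ certif Ec R i).toList.foldl (roundStep Ec) ∅ := by
        exact_mod_cast hdmem
      have hdG : s(d.fst, d.snd) ∈ G.edgeSet := by
        rcases Finset.mem_union.mp hdmem' with h | h
        · simpa [edgeFin] using hEc h
        · have := (Finset.mem_sdiff.mp ((round_subset Ec R hR i) h)).1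
          have := (Finset.mem_sdiff.mp this).1
          simpa [edgeFin] using this
      have hdcut : s(d.fst, d.snd) ∈ cutEdges G S := by
        refine Finset.mem_filter.mpr ⟨Finset.mem_univ _, hdG, d.fst, d.snd, rfl, ?_, ?_⟩
        · exact_mod_cast hdS1
        · exact_mod_cast hdS2
      have hdEc : s(d.fst, d.snd) ∉ Ec := by
        intro h
        have : s(d.fst, d.snd) ∈ cutEdges G S ∩ Ec := Finset.mem_inter.mpr ⟨hdcut, h⟩
        simp [hcut] at this
      have hdF : s(d.fst, d.snd) ∈ (R \ certif Ec R i).toList.foldl (roundStep Ec) ∅ := by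
        rcases Finset.mem_union.mp hdmem' with h | h
        · exact absurd h hdEc
        · exact h
      refine ⟨s(d.fst, d.snd), hdcut, ?_, ?_⟩
      · exact Finset.mem_union_right _ hdF
      · exact (Finset.mem_sdiff.mp ((round_subset Ec R hR i) hdF)).2
    choose g hg1 hg2 hg3 using key
    have hginj : Function.Injective g := by
      intro i j hij
      by_contra hne
      rcases Ne.lt_or_gt (fun h : i = j => hne h) with h | h
      · exact hg3 j (certif_mono Ec R (by exact_mod_cast h) (hij ▸ hg2 i))
      · exact hg3 i (certif_mono Ec R (by exact_mod_cast h) (hij.symm ▸ hg2 j))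
    set T : Finset (Sym2 V) := Finset.image g Finset.univ with hT
    have hTcard : T.card = k := by
      rw [hT, Finset.card_image_of_injective _ hginj, Finset.card_univ, Fintype.card_fin]
    have hfT : f ∉ T := by
      intro h
      obtain ⟨i, -, hi⟩ := Finset.mem_image.mp h
      exact hfE (certif_mono Ec R i.2 (hi ▸ hg2 i))
    have hsub : insert f T ⊆ cutEdges G S := by
      intro x hx
      rcases Finset.mem_insert.mp hx with rfl | hx
      · exact hf
      · obtain ⟨i, -, hi⟩ := Finset.mem_image.mp hx
        exact hi ▸ hg1 i
    have : k + 1 ≤ (cutEdges G S).card := by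
      calc k + 1 = (insert f T).card := by rw [Finset.card_insert_of_notMem hfT, hTcard]
        _ ≤ (cutEdges G S).card := Finset.card_le_card hsub
    omega
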